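/- arXiv:0904.0555 — 3 statements merged into one kernel-verified Lean document; each statement's English description precedes it below -/
import Mathlib

section
/- For the CIR model with λ ≠ 0, the functions φ_t(u) = −(λθ)/(2η²) · log(1 − 2η² b(t) u) and ψ_t(u) = a(t)u / (1 − 2η² b(t) u), where a(t) = e^{−λt} and b(t) = (1 − e^{−λt})/λ, satisfy the generalized Riccati equations ∂_t φ_t(u) = F(ψ_t(u)) and ∂_t ψ_t(u) = R(ψ_t(u)), where F(u) = λθu and R(u) = 2η²u² − λu, with initial conditions φ_0(u) = 0 and ψ_0(u) = u, for all t ≥ 0 and u < 1/(2η² b(t)). -/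
noncomputable def aCIR (lam t : ℝ) : ℝ := Real.exp (-lam * t)
noncomputable def bCIR (lam t : ℝ) : ℝ := (1 - Real.exp (-lam * t)) / lam
noncomputable def phiCIR (lam th eta t u : ℝ) : ℝ :=
  -(lam * th) / (2 * eta ^ 2) * Real.log (1 - 2 * eta ^ 2 * bCIR lam t * u)
noncomputable def psiCIR (lam eta t u : ℝ) : ℝ :=
  aCIR lam t * u / (1 - 2 * eta ^ 2 * bCIR lam t * u)

theorem cir_riccati (lam th eta : ℝ) (hlam : 0 < lam) (hth : 0 < th) (heta : 0 < eta) :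
    (∀ u : ℝ, phiCIR lam th eta 0 u = 0 ∧ psiCIR lam eta 0 u = u) ∧
    (∀ t u : ℝ, 0 ≤ t → 2 * eta ^ 2 * bCIR lam t * u < 1 →
      HasDerivAt (fun s => phiCIR lam th eta s u)
        (lam * th * psiCIR lam eta t u) t ∧
      HasDerivAt (fun s => psiCIR lam eta s u)
        (2 * eta ^ 2 * (psiCIR lam eta t u) ^ 2 - lam * psiCIR lam eta t u) t) := by
  have hlam' : lam ≠ 0 := ne_of_gt hlam
  have heta' : eta ≠ 0 := ne_of_gt heta
  constructor
  · intro u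
    simp [phiCIR, psiCIR, aCIR, bCIR]
  · intro t u _ hu
    set D : ℝ → ℝ := fun s => 1 - 2 * eta ^ 2 * bCIR lam s * u with hDdef
    have hDpos : 0 < D t := by simpa [hDdef] using sub_pos.mpr hu
    have hDne : D t ≠ 0 := ne_of_gt hDpos
    -- derivative of exp(-lam s)
    have hexp : HasDerivAt (fun s : ℝ => Real.exp (-lam * s))
        (Real.exp (-lam * t) * (-lam)) t := by
      have h1 : HasDerivAt (fun s : ℝ => -lam * s) (-lam) t := by
        simpa using (hasDerivAt_id t).const_mul (-lam)
      exact (Real.hasDerivAt_exp (-lam * t)).comp t h1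
    have hb : HasDerivAt (fun s => bCIR lam s) (Real.exp (-lam * t)) t := by
      have := ((hexp.const_sub 1).div_const lam)
      simpa [bCIR, hlam'] using this
    have hD : HasDerivAt D (-(2 * eta ^ 2 * Real.exp (-lam * t) * u)) t := by
      have := ((hb.const_mul (2 * eta ^ 2)).mul_const u).const_sub 1
      simpa [hDdef] using this
    have ha : HasDerivAt (fun s => aCIR lam s) (Real.exp (-lam * t) * (-lam)) t := hexp
    constructor
    · have hlog : HasDerivAt (fun s => Real.log (D s))
          (-(2 * eta ^ 2 * Real.exp (-lam * t) * u) / D t) t := hD.log hDne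
      have := hlog.const_mul (-(lam * th) / (2 * eta ^ 2))
      convert this using 1
      · rfl
      · rfl
      · rfl
      simp only [psiCIR, aCIR, hDdef]
      field_simp
    · have := (ha.mul_const u).div hD hDne
      convert this using 1
      · rfl
      · rfl
      · rfl
      simp only [psiCIR, aCIR, hDdef]
      field_simp
      ring
end

section
/- Let Y ∈ ℝ, c_k > 0, A_k ∈ ℝ, B_k < 0 for k = i+1,…,m, and z ∈ ℂ with Im(z) > 0. Suppose 1 − Σ_k c_k e^{A_k + B_k Y} = 0. Then ∫_{−∞}^{∞} e^{izx} (1 − Σ_k c_k e^{A_k + B_k x})⁺ dx = e^{izY} ( Σ_k c_k e^{A_k + B_k Y}/(B_k + iz) − 1/(iz) ), where the integrand is supported on [Y, ∞) because the map x ↦ 1 − Σ_k c_k e^{A_k + B_k x} is strictly increasing with zero at Y. -/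
open Complex
open MeasureTheory Set Filter

lemma integrableOn_cexp_Ioi (Y : ℝ) (w : ℂ) (hw : w.re < 0) :
    IntegrableOn (fun x : ℝ => Complex.exp (w * x)) (Set.Ioi Y) := by
  apply Integrable.mono' (g := fun x : ℝ => Real.exp (-(-w.re) * x))
  · simpa [IntegrableOn] using exp_neg_integrableOn_Ioi Y (by linarith : (0:ℝ) < -w.re)
  · exact (Complex.continuous_exp.comp (continuous_const.mul Complex.continuous_ofReal)).aestronglyMeasurable
  · filter_upwards with x
    simp [Complex.norm_exp]

lemma integral_cexp_Ioi (Y : ℝ) (w : ℂ) (hw : w.re < 0) :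
    ∫ x in Set.Ioi Y, Complex.exp (w * x) = -Complex.exp (w * Y) / w := by
  have hw0 : w ≠ 0 := fun h => by simp [h] at hw
  have hderiv : ∀ x ∈ Set.Ici Y, HasDerivAt (fun x : ℝ => Complex.exp (w * x) / w)
      (Complex.exp (w * x)) x := by
    intro x _
    have : HasDerivAt (fun x : ℝ => Complex.exp (w * x)) (Complex.exp (w * x) * w) x := by
      have h1 : HasDerivAt (fun x : ℝ => w * x) w x := by
        simpa using (Complex.ofRealCLM.hasDerivAt (x := x)).const_mul w
      exact (Complex.hasDerivAt_exp (w * x)).comp x h1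
    simpa [mul_div_assoc, mul_div_cancel_right₀ _ hw0] using this.div_const w
  have htend : Tendsto (fun x : ℝ => Complex.exp (w * x) / w) atTop (nhds 0) := by
    rw [tendsto_zero_iff_norm_tendsto_zero]
    have : Tendsto (fun x : ℝ => Real.exp (w.re * x) / ‖w‖) atTop (nhds 0) := by
      have hmul : Tendsto (fun x : ℝ => w.re * x) atTop atBot :=
        (tendsto_const_mul_atBot_of_neg hw).mpr tendsto_id
      simpa using (Real.tendsto_exp_atBot.comp hmul).div_const ‖w‖
    refine this.congr fun x => ?_
    simp [Complex.norm_exp]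
  have := integral_Ioi_of_hasDerivAt_of_tendsto' hderiv (integrableOn_cexp_Ioi Y w hw) htend
  rw [this]; ring

theorem swaption_fourier_transform (i m : ℕ) (him : i < m)
    (c A B : ℕ → ℝ) (Y : ℝ) (z : ℂ) (hz : 0 < z.im)
    (hc : ∀ k ∈ Finset.Icc (i + 1) m, 0 < c k)
    (hB : ∀ k ∈ Finset.Icc (i + 1) m, B k < 0)
    (hY : 1 - ∑ k ∈ Finset.Icc (i + 1) m, c k * Real.exp (A k + B k * Y) = 0) :
    (∫ x : ℝ, Complex.exp (Complex.I * z * x) *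
        (max (1 - ∑ k ∈ Finset.Icc (i + 1) m, c k * Real.exp (A k + B k * x)) 0 : ℝ)) =
      Complex.exp (Complex.I * z * Y) *
        ((∑ k ∈ Finset.Icc (i + 1) m,
            (c k * Real.exp (A k + B k * Y) : ℝ) / ((B k : ℂ) + Complex.I * z))
          - 1 / (Complex.I * z)) := by
  set S := Finset.Icc (i + 1) m with hS
  set g : ℝ → ℝ := fun x => 1 - ∑ k ∈ S, c k * Real.exp (A k + B k * x) with hg
  have hterm : ∀ x y : ℝ, x ≤ y → ∀ k ∈ S,
      c k * Real.exp (A k + B k * y) ≤ c k * Real.exp (A k + B k * x) := by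
    intro x y hxy k hk
    have hBk := hB k hk
    exact mul_le_mul_of_nonneg_left
      (Real.exp_le_exp.mpr (by nlinarith)) (hc k hk).le
  have hg_le : ∀ x : ℝ, x ≤ Y → g x ≤ 0 := by
    intro x hx
    have := Finset.sum_le_sum (hterm x Y hx)
    simp only [hg]; linarith
  have hg_ge : ∀ x : ℝ, Y ≤ x → 0 ≤ g x := by
    intro x hx
    have := Finset.sum_le_sum (hterm Y x hx)
    simp only [hg]; linarith
  have h0re : (Complex.I * z).re < 0 := by simp [Complex.mul_re, hz]
  have h0ne : Complex.I * z ≠ 0 := fun h => by simp [h] at h0re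
  have hkre : ∀ k ∈ S, ((B k : ℂ) + Complex.I * z).re < 0 := by
    intro k hk
    have := hB k hk
    simp [Complex.add_re, Complex.mul_re]; nlinarith
  have hkne : ∀ k ∈ S, ((B k : ℂ) + Complex.I * z) ≠ 0 := by
    intro k hk h
    have := hkre k hk; rw [h] at this; simp at this
  -- restrict to Ioi Y
  have step1 : (∫ x : ℝ, Complex.exp (Complex.I * z * x) * (max (g x) 0 : ℝ))
      = ∫ x in Set.Ioi Y, Complex.exp (Complex.I * z * x) * (max (g x) 0 : ℝ) := by
    refine (setIntegral_eq_integral_of_forall_compl_eq_zero fun x hx => ?_).symm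
    have hx' : x ≤ Y := not_lt.mp hx
    rw [max_eq_right (hg_le x hx')]
    simp
  have step2 : (∫ x in Set.Ioi Y, Complex.exp (Complex.I * z * x) * (max (g x) 0 : ℝ))
      = ∫ x in Set.Ioi Y, (Complex.exp (Complex.I * z * x)
          - ∑ k ∈ S, (c k * Real.exp (A k) : ℝ) *
              Complex.exp (((B k : ℂ) + Complex.I * z) * x)) := by
    refine setIntegral_congr_fun measurableSet_Ioi fun x hx => ?_
    rw [max_eq_left (hg_ge x (le_of_lt hx))]
    simp only [hg]
    push_cast
    rw [mul_sub, mul_one, Finset.mul_sum]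
    congr 1
    refine Finset.sum_congr rfl fun k hk => ?_
    rw [add_mul, Complex.exp_add, Complex.exp_add]
    push_cast
    ring
  have hint : IntegrableOn (fun x : ℝ => ∑ k ∈ S,
      (c k * Real.exp (A k) : ℝ) * Complex.exp (((B k : ℂ) + Complex.I * z) * x))
      (Set.Ioi Y) := by
    apply MeasureTheory.integrable_finset_sum
    intro k hk
    exact (integrableOn_cexp_Ioi Y _ (hkre k hk)).const_mul _
  rw [step1, step2, integral_sub (integrableOn_cexp_Ioi Y _ h0re) hint,
    integral_finset_sum _ fun k hk => (integrableOn_cexp_Ioi Y _ (hkre k hk)).const_mul _]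
  simp only [MeasureTheory.integral_const_mul]
  rw [integral_cexp_Ioi Y _ h0re]
  have : ∀ k ∈ S, (∫ x in Set.Ioi Y, Complex.exp (((B k : ℂ) + Complex.I * z) * x))
      = -Complex.exp (((B k : ℂ) + Complex.I * z) * Y) / ((B k : ℂ) + Complex.I * z) := by
    intro k hk
    exact integral_cexp_Ioi Y _ (hkre k hk)
  rw [Finset.sum_congr rfl fun k hk => by rw [this k hk]]
  have key : ∀ k ∈ S, ((c k * Real.exp (A k) : ℝ) : ℂ) *
      (-Complex.exp (((B k : ℂ) + Complex.I * z) * Y) / ((B k : ℂ) + Complex.I * z))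
      = -(Complex.exp (Complex.I * z * Y) *
          ((c k * Real.exp (A k + B k * Y) : ℝ) / ((B k : ℂ) + Complex.I * z))) := by
    intro k hk
    rw [add_mul, Complex.exp_add]
    push_cast [Real.exp_add]
    field_simp
  rw [Finset.sum_congr rfl key, Finset.sum_neg_distrib, mul_sub, Finset.mul_sum]
  ring
end

section
/- Suppose the conditional affine property holds: E_x[exp⟨u, X_{t+s}⟩ | ℱ_s] = exp(φ_t(u) + ⟨ψ_t(u), X_s⟩) a.s. for all admissible t, s, u, and M^{u_k}_t := exp(φ_{T−t}(u_k) + ⟨ψ_{T−t}(u_k), X_t⟩) with M^{u_k}_s > 0. Then for 0 ≤ s ≤ r ≤ T and v with ψ_{T−r}(u_k) + v admissible, E_x[(M^{u_k}_r / M^{u_k}_s) · exp⟨v, X_r⟩ | ℱ_s] = exp( φ_{r−s}(ψ_{T−r}(u_k)+v) − φ_{r−s}(ψ_{T−r}(u_k)) + ⟨ψ_{r−s}(ψ_{T−r}(u_k)+v) − ψ_{r−s}(ψ_{T−r}(u_k)), X_s⟩ ), assuming additionally the semi-flow property φ_{t+s}(u) = φ_t(u) + φ_s(ψ_t(u)) and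 ψ_{t+s}(u) = ψ_s(ψ_t(u)). -/
open MeasureTheory

lemma integrable_of_condexp_eq_exp {Ω : Type*} {m0 : MeasurableSpace Ω} {μ : Measure Ω}
    [IsProbabilityMeasure μ] {m : MeasurableSpace Ω} {f : Ω → ℝ} {g : Ω → ℝ}
    (h : μ[f|m] =ᵐ[μ] fun ω => Real.exp (g ω)) : Integrable f μ := by
  by_contra hf
  rw [condExp_of_not_integrable hf] at h
  obtain ⟨ω, hω⟩ := h.exists
  exact (Real.exp_pos (g ω)).ne' (by simpa using hω.symm)

lemma integrable_mul_of_sq {Ω : Type*} {m0 : MeasurableSpace Ω} {μ : Measure Ω} {g h : Ω → ℝ}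
    (hg : AEStronglyMeasurable g μ) (hh : AEStronglyMeasurable h μ)
    (hg2 : Integrable (fun ω => g ω ^ 2) μ) (hh2 : Integrable (fun ω => h ω ^ 2) μ) :
    Integrable (fun ω => g ω * h ω) μ := by
  refine Integrable.mono ((hg2.add hh2).div_const 2) (hg.mul hh) (ae_of_all _ fun ω => ?_)
  simp only [Real.norm_eq_abs, abs_mul, Pi.add_apply]
  nlinarith [sq_nonneg (|g ω| - |h ω|), sq_abs (g ω), sq_abs (h ω),
    le_abs_self ((g ω ^ 2 + h ω ^ 2) / 2), abs_nonneg (g ω), abs_nonneg (h ω)]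

theorem forward_measure_affine {Ω : Type*} {m : MeasurableSpace Ω}
    (μ : Measure Ω) [IsProbabilityMeasure μ] (d : ℕ) (T : ℝ) (hT : 0 ≤ T)
    (F : ℝ → MeasurableSpace Ω) (hF : ∀ s, F s ≤ m)
    (X : ℝ → Ω → (Fin d → ℝ))
    (phi : ℝ → (Fin d → ℝ) → ℝ) (psi : ℝ → (Fin d → ℝ) → (Fin d → ℝ))
    (haff : ∀ t s : ℝ, 0 ≤ t → 0 ≤ s → t + s ≤ T → ∀ u : Fin d → ℝ,
      (μ[fun ω => Real.exp (∑ i, u i * X (t + s) ω i)|F s]) =ᵐ[μ]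
        fun ω => Real.exp (phi t u + ∑ i, psi t u i * X s ω i))
    (hflowphi : ∀ t s : ℝ, 0 ≤ t → 0 ≤ s → ∀ u, phi (t + s) u = phi t u + phi s (psi t u))
    (hflowpsi : ∀ t s : ℝ, 0 ≤ t → 0 ≤ s → ∀ u, psi (t + s) u = psi s (psi t u))
    (uk : Fin d → ℝ)
    (M : ℝ → Ω → ℝ)
    (hM : ∀ t ω, M t ω =
      Real.exp (phi (T - t) uk + ∑ i, psi (T - t) uk i * X t ω i)) :
    ∀ s r : ℝ, 0 ≤ s → s ≤ r → r ≤ T → ∀ v : Fin d → ℝ,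
      (μ[fun ω => (M r ω / M s ω) * Real.exp (∑ i, v i * X r ω i)|F s]) =ᵐ[μ]
        fun ω => Real.exp
          (phi (r - s) (psi (T - r) uk + v) - phi (r - s) (psi (T - r) uk) +
            ∑ i, (psi (r - s) (psi (T - r) uk + v) i -
                  psi (r - s) (psi (T - r) uk) i) * X s ω i) := by
  intro s r hs hsr hrT v
  have hrs : 0 ≤ r - s := sub_nonneg.2 hsr
  set p : Fin d → ℝ := psi (T - r) uk with hp
  -- conditional affine property at time r, conditioned on F s
  have key : ∀ u : Fin d → ℝ,
      (μ[fun ω => Real.exp (∑ i, u i * X r ω i)|F s]) =ᵐ[μ]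
        fun ω => Real.exp (phi (r - s) u + ∑ i, psi (r - s) u i * X s ω i) := by
    intro u
    have := haff (r - s) s hrs hs (by linarith) u
    rwa [show r - s + s = r by ring] at this
  have keyInt : ∀ u : Fin d → ℝ,
      Integrable (fun ω => Real.exp (∑ i, u i * X r ω i)) μ :=
    fun u => integrable_of_condexp_eq_exp (key u)
  have keySInt : ∀ u : Fin d → ℝ,
      Integrable (fun ω => Real.exp (∑ i, u i * X s ω i)) μ := by
    intro u
    have := haff 0 s le_rfl hs (by linarith) u
    rw [show (0 : ℝ) + s = s by ring] at this
    exact integrable_of_condexp_eq_exp this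
  -- semiflow identities
  have hphiTs : phi (T - s) uk = phi (T - r) uk + phi (r - s) p := by
    have := hflowphi (T - r) (r - s) (by linarith) hrs uk
    rwa [show T - r + (r - s) = T - s by ring] at this
  have hpsiTs : psi (T - s) uk = psi (r - s) p := by
    have := hflowpsi (T - r) (r - s) (by linarith) hrs uk
    rwa [show T - r + (r - s) = T - s by ring] at this
  -- rewrite the integrand
  have hf0 : ∀ ω, (M r ω / M s ω) * Real.exp (∑ i, v i * X r ω i) =
      (Real.exp (-(phi (r - s) p)) *
        (Real.exp (∑ i, psi (r - s) p i * X s ω i))⁻¹) *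
        Real.exp (∑ i, (p + v) i * X r ω i) := by
    intro ω
    rw [hM, hM, hphiTs, hpsiTs, ← Real.exp_neg]
    simp only [div_eq_mul_inv, ← Real.exp_neg, ← Real.exp_add, Pi.add_apply, add_mul,
      Finset.sum_add_distrib]
    congr 1
    ring
  -- integrability of the integrand
  have hA : Integrable (fun ω => Real.exp (∑ i, (p + v) i * X r ω i)) μ := keyInt _
  have hB : Integrable (fun ω => Real.exp (-(∑ i, psi (r - s) p i * X s ω i))) μ := by
    have := keySInt (fun i => -(psi (r - s) p i))
    simpa [neg_mul, Finset.sum_neg_distrib] using this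
  have hA2 : Integrable (fun ω => Real.exp (∑ i, (p + v) i * X r ω i) ^ 2) μ := by
    refine (keyInt (fun i => 2 * (p + v) i)).congr (ae_of_all _ fun ω => ?_)
    simp only [pow_two, ← Real.exp_add, ← Finset.sum_add_distrib]
    congr 1
    exact Finset.sum_congr rfl fun i _ => by ring
  have hB2 : Integrable (fun ω => Real.exp (-(∑ i, psi (r - s) p i * X s ω i)) ^ 2) μ := by
    refine (keySInt (fun i => -2 * psi (r - s) p i)).congr (ae_of_all _ fun ω => ?_)
    simp only [pow_two, ← Real.exp_add, ← neg_add, ← Finset.sum_add_distrib]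
    congr 1
    rw [← Finset.sum_neg_distrib]
    exact Finset.sum_congr rfl fun i _ => by ring
  have hAB : Integrable (fun ω => Real.exp (∑ i, (p + v) i * X r ω i) *
      Real.exp (-(∑ i, psi (r - s) p i * X s ω i))) μ :=
    integrable_mul_of_sq hA.aestronglyMeasurable hB.aestronglyMeasurable hA2 hB2
  -- the F s-measurable factor
  set G : Ω → ℝ := fun ω =>
      ((μ[fun ω => Real.exp (∑ i, p i * X r ω i)|F s]) ω)⁻¹ with hG
  have hGmeas : StronglyMeasurable[F s] G :=
    (stronglyMeasurable_condExp.measurable.inv).stronglyMeasurable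
  have hGeq : G =ᵐ[μ] fun ω =>
      Real.exp (-(phi (r - s) p)) * (Real.exp (∑ i, psi (r - s) p i * X s ω i))⁻¹ := by
    filter_upwards [key p] with ω hω
    rw [hG]
    simp only [hω, Real.exp_add, mul_inv, Real.exp_neg]
  -- the integrand coincides a.e. with G * A
  have hcongr : (fun ω => (M r ω / M s ω) * Real.exp (∑ i, v i * X r ω i)) =ᵐ[μ]
      G * (fun ω => Real.exp (∑ i, (p + v) i * X r ω i)) := by
    filter_upwards [hGeq] with ω hω
    simp only [Pi.mul_apply, hω, hf0 ω]
  have hGA : Integrable (G * (fun ω => Real.exp (∑ i, (p + v) i * X r ω i))) μ := by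
    refine Integrable.congr ?_ hcongr
    refine (hAB.const_mul (Real.exp (-(phi (r - s) p)))).congr (ae_of_all _ fun ω => ?_)
    simp only [hf0 ω, Real.exp_neg]
    ring
  refine (condExp_congr_ae hcongr).trans ?_
  refine (condExp_mul_of_stronglyMeasurable_left hGmeas hGA hA).trans ?_
  filter_upwards [hGeq, key (p + v)] with ω h1 h2
  simp only [Pi.mul_apply, h1, h2]
  rw [← Real.exp_neg, ← Real.exp_add, ← Real.exp_add]
  congr 1
  simp only [sub_mul, Finset.sum_sub_distrib]
  ring
end
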